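/- Safe screening rule: let à ∈ ℝ^{n} (feature column), θ* ∈ ℝ^n (the optimal dual), θ̃ a dual feasible point, λ > 0, and suppose ‖θ* − θ̃‖₂ ≤ R and β^⊤θ* = 0 where β^⊤θ̃ = 0. If |Ã^⊤θ̃| + R·sqrt(‖Ã‖₂² − (Ã^⊤β)²/‖β‖₂²) < λ, then |Ã^⊤θ*| < λ. -/
import Mathlib


open scoped RealInnerProductSpace

/-- Safe screening rule: if the upper bound `|Ã^⊤θ̃| + R √(‖Ã‖² − (Ã^⊤β)²/‖β‖²)` is below
`λ`, then `|Ã^⊤θ*| < λ`. -/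
theorem safe_screening_rule (n : ℕ)
    (At β θs θt : EuclideanSpace ℝ (Fin n)) (hβ : β ≠ 0)
    (R lam : ℝ) (hR : 0 ≤ R) (hlam : 0 < lam)
    (hball : ‖θs - θt‖ ≤ R) (hθs : ⟪β, θs⟫ = 0) (hθt : ⟪β, θt⟫ = 0)
    (hbound : |⟪At, θt⟫| + R * Real.sqrt (‖At‖ ^ 2 - ⟪At, β⟫ ^ 2 / ‖β‖ ^ 2) < lam) :
    |⟪At, θs⟫| < lam := by
  have hβ2 : (0:ℝ) < ‖β‖ ^ 2 := by
    have := norm_pos_iff.mpr hβ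
    positivity
  set c : ℝ := ⟪At, β⟫ / ‖β‖ ^ 2 with hc
  set P : EuclideanSpace ℝ (Fin n) := At - c • β with hP
  set v : EuclideanSpace ℝ (Fin n) := θs - θt with hv
  have hβv : ⟪β, v⟫ = 0 := by
    simp [hv, inner_sub_right, hθs, hθt]
  have hAv : ⟪At, v⟫ = ⟪P, v⟫ := by
    rw [hP, inner_sub_left, real_inner_smul_left, hβv]
    ring
  have hPnorm : ‖P‖ ^ 2 = ‖At‖ ^ 2 - ⟪At, β⟫ ^ 2 / ‖β‖ ^ 2 := by
    rw [hP, @norm_sub_sq_real, norm_smul, real_inner_smul_right]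
    rw [mul_pow, Real.norm_eq_abs, sq_abs, hc]
    rw [← real_inner_self_eq_norm_sq β]
    have hβ2' : ⟪β, β⟫ ≠ 0 := by
      rw [real_inner_self_eq_norm_sq]; exact ne_of_gt hβ2
    generalize ⟪At, β⟫ = a at *
    generalize hb : ⟪β, β⟫ = b at *
    field_simp
    ring
  have hPle : ‖P‖ = Real.sqrt (‖At‖ ^ 2 - ⟪At, β⟫ ^ 2 / ‖β‖ ^ 2) := by
    rw [← hPnorm, Real.sqrt_sq (norm_nonneg _)]
  have h1 : |⟪At, θs⟫| ≤ |⟪At, θt⟫| + |⟪At, v⟫| := by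
    have : ⟪At, θs⟫ = ⟪At, θt⟫ + ⟪At, v⟫ := by
      simp [hv, inner_sub_right]
    rw [this]; exact abs_add_le _ _
  have h2 : |⟪At, v⟫| ≤ ‖P‖ * ‖v‖ := by
    rw [hAv]; exact abs_real_inner_le_norm _ _
  have h3 : ‖P‖ * ‖v‖ ≤ ‖P‖ * R := by
    exact mul_le_mul_of_nonneg_left hball (norm_nonneg _)
  calc |⟪At, θs⟫| ≤ |⟪At, θt⟫| + ‖P‖ * R := by linarith
    _ = |⟪At, θt⟫| + R * Real.sqrt (‖At‖ ^ 2 - ⟪At, β⟫ ^ 2 / ‖β‖ ^ 2) := by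
        rw [hPle]; ring
    _ < lam := hbound
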